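/- The subgraph H of And(k) induced by W_0 ∪ V_2 is connected (for k ≥ 2). -/

import Mathlib

/-- The connection set of the Andrásfai graph: residues ≡ 1 (mod 3) in Z_{3k-1}. -/
def andrasfaiSet (k : ℕ) : Set (ZMod (3 * k - 1)) :=
  {x | ∃ t < k, x = ((3 * t + 1 : ℕ) : ZMod (3 * k - 1))}

/-- The Andrásfai graph And(k) = Cay(Z_{3k-1}; C). -/
def andrasfai (k : ℕ) : SimpleGraph (ZMod (3 * k - 1)) :=
  SimpleGraph.fromRel (fun g h => h - g ∈ andrasfaiSet k)

/-- W₀ = {3t : 1 ≤ t ≤ k-1} as a subset of Z_{3k-1}. -/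
def andW0 (k : ℕ) : Set (ZMod (3 * k - 1)) :=
  {x | ∃ t, 1 ≤ t ∧ t ≤ k - 1 ∧ x = ((3 * t : ℕ) : ZMod (3 * k - 1))}

/-- V₂ = {3t+2 : 0 ≤ t ≤ k-2} as a subset of Z_{3k-1}. -/
def andV2 (k : ℕ) : Set (ZMod (3 * k - 1)) :=
  {x | ∃ t ≤ k - 2, x = ((3 * t + 2 : ℕ) : ZMod (3 * k - 1))}

lemma and_cast_ne {n a b : ℕ} (ha : a < n) (hb : b < n) (h : a ≠ b) :
    ((a : ZMod n) ≠ (b : ZMod n)) := by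
  haveI : NeZero n := ⟨by omega⟩
  intro he
  apply h
  have := congrArg ZMod.val he
  rwa [ZMod.val_cast_of_lt ha, ZMod.val_cast_of_lt hb] at this

theorem andrasfai_induced_connected (k : ℕ) (hk : 2 ≤ k) :
    ((andrasfai k).induce (andW0 k ∪ andV2 k)).Connected := by
  rw [SimpleGraph.connected_iff_exists_forall_reachable]
  have h2mem : ((2 : ℕ) : ZMod (3 * k - 1)) ∈ andW0 k ∪ andV2 k :=
    Or.inr ⟨0, by omega, by norm_num⟩
  -- adjacency 2 ~ 3a for 1 ≤ a ≤ k-1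
  have adj2 : ∀ a, 1 ≤ a → a ≤ k - 1 →
      (andrasfai k).Adj ((2 : ℕ) : ZMod (3 * k - 1)) ((3 * a : ℕ) : ZMod (3 * k - 1)) := by
    intro a h1 h2
    rw [andrasfai, SimpleGraph.fromRel_adj]
    refine ⟨and_cast_ne (by omega) (by omega) (by omega), Or.inl ⟨a - 1, by omega, ?_⟩⟩
    rw [show 3 * (a - 1) + 1 = 3 * a - 2 by omega, Nat.cast_sub (by omega)]
  -- adjacency 3(t+1) ~ 3t+2 for t ≤ k-2
  have adjV : ∀ t, t ≤ k - 2 →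
      (andrasfai k).Adj ((3 * (t + 1) : ℕ) : ZMod (3 * k - 1))
        ((3 * t + 2 : ℕ) : ZMod (3 * k - 1)) := by
    intro t ht
    rw [andrasfai, SimpleGraph.fromRel_adj]
    refine ⟨and_cast_ne (by omega) (by omega) (by omega), Or.inr ⟨0, by omega, ?_⟩⟩
    rw [show 3 * 0 + 1 = 3 * (t + 1) - (3 * t + 2) by omega, Nat.cast_sub (by omega)]
  refine ⟨⟨((2 : ℕ) : ZMod (3 * k - 1)), h2mem⟩, ?_⟩
  rintro ⟨x, hx⟩
  have memW : ∀ a, 1 ≤ a → a ≤ k - 1 →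
      ((3 * a : ℕ) : ZMod (3 * k - 1)) ∈ andW0 k ∪ andV2 k :=
    fun a h1 h2 => Or.inl ⟨a, h1, h2, rfl⟩
  obtain (⟨t, ht1, ht2, rfl⟩ | ⟨t, ht, rfl⟩) := hx
  · exact (SimpleGraph.Adj.reachable (u := (⟨_, h2mem⟩ : (andW0 k ∪ andV2 k : Set _)))
      (v := ⟨_, Or.inl ⟨t, ht1, ht2, rfl⟩⟩) (adj2 t ht1 ht2))
  · refine SimpleGraph.Reachable.trans
      (SimpleGraph.Adj.reachable (u := (⟨_, h2mem⟩ : (andW0 k ∪ andV2 k : Set _)))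
        (v := ⟨_, memW (t + 1) (by omega) (by omega)⟩) (adj2 (t + 1) (by omega) (by omega)))
      (SimpleGraph.Adj.reachable (v := (⟨_, Or.inr ⟨t, ht, rfl⟩⟩ : (andW0 k ∪ andV2 k : Set _))) ?_)
    exact adjV t ht
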